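/- Let d ≥ 1 and let l : ℝᵈ → ℝ be differentiable with ‖∇l(x)‖₂ ≤ C_l for all x, where C_l > 0. Let λ > 0, let g : ℝ → ℝ be continuously differentiable and strictly increasing with g(0) = 0, let 𝒞 > 0 satisfy g(𝒞) = 1/λ, and let C_g > 0 satisfy g′(u) ≤ C_g for all u ∈ [0, 𝒞]. Fix M_c > 0 and set L_c = min{λ M_c / C_l, M_c / (C_l C_g 𝒞)}. Let p : ℝ → ℝ be continuous with 0 ≤ p(t) ≤ L_c for all t, and define the expected best-response cost c(x) = ∫_{l(x)}^{l(x)+𝒞} g(t − l(x)) p(t) dt. Then |c(x₁) − c(x₂)| ≤ M_c‖x₁ − x₂‖₂ for all x₁, x₂ ∈ ℝᵈ. -/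

import Mathlib

/-- A differentiable monotone real function has nonnegative derivative. -/
lemma aux_mono_deriv_nonneg (g : ℝ → ℝ) (hdiff : Differentiable ℝ g) (hmono : Monotone g)
    (u : ℝ) : 0 ≤ deriv g u := by
  have h := (hdiff u).hasDerivAt
  rw [hasDerivAt_iff_tendsto_slope] at h
  refine ge_of_tendsto h ?_
  filter_upwards [self_mem_nhdsWithin] with x hx
  rcases lt_or_gt_of_ne (Set.mem_compl_singleton_iff.mp hx) with h1 | h1
  · have h2 : g x ≤ g u := hmono h1.le
    rw [slope_def_field]
    exact div_nonneg_of_nonpos (by linarith) (by linarith)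
  · rw [slope_def_field]
    exact div_nonneg (by have := hmono h1.le; linarith) (by linarith)

/-- A randomized threshold classifier whose threshold density is bounded by
`L_c = min (λ M_c / C_l) (M_c / (C_l C_g 𝒞))` satisfies individual fairness
with respect to the expected best-response cost with constant `M_c`. -/
theorem randomized_classifier_IF_wrt_BRC
    (d : ℕ) (hd : 1 ≤ d)
    (l : EuclideanSpace ℝ (Fin d) → ℝ) (hl_diff : Differentiable ℝ l)
    (C_l : ℝ) (hCl : 0 < C_l) (hl_grad : ∀ x, ‖gradient l x‖ ≤ C_l)
    (lam : ℝ) (hlam : 0 < lam)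
    (g : ℝ → ℝ) (hg : ContDiff ℝ 1 g) (hg_mono : StrictMono g) (hg0 : g 0 = 0)
    (𝒞 : ℝ) (h𝒞 : 0 < 𝒞) (hg𝒞 : g 𝒞 = 1 / lam)
    (C_g : ℝ) (hCg : 0 < C_g) (hg' : ∀ u ∈ Set.Icc (0 : ℝ) 𝒞, deriv g u ≤ C_g)
    (M_c : ℝ) (hMc : 0 < M_c)
    (L_c : ℝ) (hLc : L_c = min (lam * M_c / C_l) (M_c / (C_l * C_g * 𝒞)))
    (p : ℝ → ℝ) (hp_cont : Continuous p) (hp : ∀ t, 0 ≤ p t ∧ p t ≤ L_c)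
    (c : EuclideanSpace ℝ (Fin d) → ℝ)
    (hc : ∀ x, c x = ∫ t in (l x)..(l x + 𝒞), g (t - l x) * p t) :
    ∀ x₁ x₂, |c x₁ - c x₂| ≤ M_c * ‖x₁ - x₂‖ := by
  -- basic consequences
  have hgdiff : Differentiable ℝ g := hg.differentiable one_ne_zero
  have hg_cont : Continuous g := hgdiff.continuous
  have hg'_cont : Continuous (deriv g) := hg.continuous_deriv le_rfl
  have hg'_nonneg : ∀ u, 0 ≤ deriv g u :=
    aux_mono_deriv_nonneg g hgdiff hg_mono.monotone
  have hLc_nonneg : 0 ≤ L_c := le_trans (hp 0).1 (hp 0).2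
  have hLc1 : L_c ≤ lam * M_c / C_l := hLc ▸ min_le_left _ _
  have hLc2 : L_c ≤ M_c / (C_l * C_g * 𝒞) := hLc ▸ min_le_right _ _
  -- the antiderivative of p
  set P : ℝ → ℝ := fun t => ∫ r in (0:ℝ)..t, p r with hPdef
  have hPderiv : ∀ t, HasDerivAt P (p t) t := by
    intro t
    exact intervalIntegral.integral_hasDerivAt_right
      (hp_cont.intervalIntegrable _ _)
      (hp_cont.stronglyMeasurableAtFilter _ _)
      hp_cont.continuousAt
  have hP_cont : Continuous P := by
    rw [continuous_iff_continuousAt]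
    exact fun t => (hPderiv t).continuousAt
  have hP_diff : ∀ a b, a ≤ b → 0 ≤ P b - P a ∧ P b - P a ≤ L_c * (b - a) := by
    intro a b hab
    have hsub : P b - P a = ∫ r in a..b, p r := by
      rw [hPdef]
      simp only
      rw [← intervalIntegral.integral_add_adjacent_intervals
        (hp_cont.intervalIntegrable 0 a) (hp_cont.intervalIntegrable a b)]
      ring
    constructor
    · rw [hsub]
      exact intervalIntegral.integral_nonneg hab (fun u _ => (hp u).1)
    · rw [hsub]
      calc ∫ r in a..b, p r ≤ ∫ _ in a..b, L_c := by
            apply intervalIntegral.integral_mono_on hab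
              (hp_cont.intervalIntegrable a b) (intervalIntegrable_const)
            exact fun u _ => (hp u).2
        _ = L_c * (b - a) := by simp [mul_comm]
  -- the cost as a function of the score
  set F : ℝ → ℝ := fun s => ∫ u in (0:ℝ)..𝒞, g u * p (u + s) with hFdef
  have hcF : ∀ x, c x = F (l x) := by
    intro x
    rw [hc x, hFdef]
    have := intervalIntegral.integral_comp_add_right
      (a := (0:ℝ)) (b := 𝒞) (fun t => g (t - l x) * p t) (l x)
    simp only [zero_add, add_sub_cancel_right] at this
    simp only
    rw [add_comm (l x) 𝒞, ← this]
  -- integration by parts identity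
  have hIBP : ∀ s, F s = g 𝒞 * P (𝒞 + s) - ∫ u in (0:ℝ)..𝒞, deriv g u * P (u + s) := by
    intro s
    have hH : ∀ u : ℝ, HasDerivAt (fun u => g u * P (u + s))
        (deriv g u * P (u + s) + g u * p (u + s)) u := by
      intro u
      have h1 : HasDerivAt (fun u : ℝ => P (u + s)) (p (u + s)) u := by
        have := (hPderiv (u + s)).comp u ((hasDerivAt_id u).add_const s)
        simpa [Function.comp_def] using this
      exact ((hgdiff u).hasDerivAt).mul h1
    have hint1 : IntervalIntegrable (fun u => deriv g u * P (u + s)) MeasureTheory.volume 0 𝒞 :=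
      (hg'_cont.mul (hP_cont.comp (continuous_id.add continuous_const))).intervalIntegrable _ _
    have hint2 : IntervalIntegrable (fun u => g u * p (u + s)) MeasureTheory.volume 0 𝒞 :=
      (hg_cont.mul (hp_cont.comp (continuous_id.add continuous_const))).intervalIntegrable _ _
    have hFTC := intervalIntegral.integral_eq_sub_of_hasDerivAt
      (fun u _ => hH u) (hint1.add hint2)
    rw [intervalIntegral.integral_add hint1 hint2] at hFTC
    simp only [hg0, zero_mul, sub_zero] at hFTC
    rw [hFdef]
    simp only
    linarith [hFTC]
  -- Lipschitz bound for F
  have hkey : ∀ s₁ s₂, s₁ ≤ s₂ → |F s₂ - F s₁| ≤ M_c / C_l * (s₂ - s₁) := by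
    intro s₁ s₂ h12
    have hδ0 : 0 ≤ s₂ - s₁ := by linarith
    have hint : ∀ s : ℝ, IntervalIntegrable (fun u => deriv g u * P (u + s))
        MeasureTheory.volume 0 𝒞 := fun s =>
      (hg'_cont.mul (hP_cont.comp (continuous_id.add continuous_const))).intervalIntegrable _ _
    have hdiffeq : F s₂ - F s₁ = g 𝒞 * (P (𝒞 + s₂) - P (𝒞 + s₁))
        - ∫ u in (0:ℝ)..𝒞, deriv g u * (P (u + s₂) - P (u + s₁)) := by
      rw [hIBP s₁, hIBP s₂]
      have : (∫ u in (0:ℝ)..𝒞, deriv g u * (P (u + s₂) - P (u + s₁)))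
          = (∫ u in (0:ℝ)..𝒞, deriv g u * P (u + s₂))
            - ∫ u in (0:ℝ)..𝒞, deriv g u * P (u + s₁) := by
        rw [← intervalIntegral.integral_sub (hint s₂) (hint s₁)]
        congr 1
        funext u
        ring
      rw [this]
      ring
    have hg𝒞_nonneg : 0 ≤ g 𝒞 := by rw [hg𝒞]; positivity
    have hPd : ∀ u : ℝ, 0 ≤ P (u + s₂) - P (u + s₁) ∧ P (u + s₂) - P (u + s₁) ≤ L_c * (s₂ - s₁) := by
      intro u
      have := hP_diff (u + s₁) (u + s₂) (by linarith)
      constructor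
      · exact this.1
      · have h2 := this.2
        have h3 : u + s₂ - (u + s₁) = s₂ - s₁ := by ring
        rw [h3] at h2
        linarith
    -- upper bound
    have hub : F s₂ - F s₁ ≤ 1 / lam * (L_c * (s₂ - s₁)) := by
      rw [hdiffeq]
      have h1 : g 𝒞 * (P (𝒞 + s₂) - P (𝒞 + s₁)) ≤ 1 / lam * (L_c * (s₂ - s₁)) := by
        rw [hg𝒞]
        exact mul_le_mul_of_nonneg_left (hPd 𝒞).2 (by positivity)
      have h2 : 0 ≤ ∫ u in (0:ℝ)..𝒞, deriv g u * (P (u + s₂) - P (u + s₁)) :=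
        intervalIntegral.integral_nonneg h𝒞.le
          (fun u _ => mul_nonneg (hg'_nonneg u) (hPd u).1)
      linarith
    -- lower bound
    have hlb : -(C_g * 𝒞 * (L_c * (s₂ - s₁))) ≤ F s₂ - F s₁ := by
      rw [hdiffeq]
      have h1 : 0 ≤ g 𝒞 * (P (𝒞 + s₂) - P (𝒞 + s₁)) :=
        mul_nonneg hg𝒞_nonneg (hPd 𝒞).1
      have h2 : (∫ u in (0:ℝ)..𝒞, deriv g u * (P (u + s₂) - P (u + s₁)))
          ≤ C_g * 𝒞 * (L_c * (s₂ - s₁)) := by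
        have hintd : IntervalIntegrable (fun u => deriv g u * (P (u + s₂) - P (u + s₁)))
            MeasureTheory.volume 0 𝒞 := by
          have : Continuous fun u => deriv g u * (P (u + s₂) - P (u + s₁)) :=
            hg'_cont.mul ((hP_cont.comp (continuous_id.add continuous_const)).sub
              (hP_cont.comp (continuous_id.add continuous_const)))
          exact this.intervalIntegrable _ _
        calc (∫ u in (0:ℝ)..𝒞, deriv g u * (P (u + s₂) - P (u + s₁)))
            ≤ ∫ _ in (0:ℝ)..𝒞, C_g * (L_c * (s₂ - s₁)) := by
              apply intervalIntegral.integral_mono_on h𝒞.le hintd intervalIntegrable_const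
              intro u hu
              exact mul_le_mul (hg' u hu) (hPd u).2 (hPd u).1 hCg.le
          _ = C_g * 𝒞 * (L_c * (s₂ - s₁)) := by simp; ring
      linarith
    -- combine
    have hMC1 : 1 / lam * (L_c * (s₂ - s₁)) ≤ M_c / C_l * (s₂ - s₁) := by
      have : L_c / lam ≤ M_c / C_l := by
        rw [div_le_div_iff₀ hlam hCl]
        calc L_c * C_l ≤ (lam * M_c / C_l) * C_l :=
              mul_le_mul_of_nonneg_right hLc1 hCl.le
          _ = M_c * lam := by field_simp
      calc 1 / lam * (L_c * (s₂ - s₁)) = (L_c / lam) * (s₂ - s₁) := by ring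
        _ ≤ M_c / C_l * (s₂ - s₁) := mul_le_mul_of_nonneg_right this hδ0
    have hMC2 : C_g * 𝒞 * (L_c * (s₂ - s₁)) ≤ M_c / C_l * (s₂ - s₁) := by
      have : C_g * 𝒞 * L_c ≤ M_c / C_l := by
        have h0 : L_c * (C_l * C_g * 𝒞) ≤ M_c := by
          rw [← le_div_iff₀ (by positivity)]
          exact hLc2
        rw [le_div_iff₀ hCl]
        nlinarith
      calc C_g * 𝒞 * (L_c * (s₂ - s₁)) = (C_g * 𝒞 * L_c) * (s₂ - s₁) := by ring
        _ ≤ M_c / C_l * (s₂ - s₁) := mul_le_mul_of_nonneg_right this hδ0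
    rw [abs_le]
    constructor
    · linarith
    · linarith
  -- l is C_l-Lipschitz
  have hl_lip : ∀ x₁ x₂, |l x₁ - l x₂| ≤ C_l * ‖x₁ - x₂‖ := by
    intro x₁ x₂
    have hb : ∀ x ∈ (Set.univ : Set (EuclideanSpace ℝ (Fin d))), ‖fderiv ℝ l x‖ ≤ C_l := by
      intro x _
      have : ‖fderiv ℝ l x‖ = ‖gradient l x‖ := by
        rw [gradient]
        exact ((InnerProductSpace.toDual ℝ _).symm.norm_map _).symm
      rw [this]; exact hl_grad x
    have := convex_univ.norm_image_sub_le_of_norm_fderiv_le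
      (fun x _ => hl_diff x) hb (Set.mem_univ x₂) (Set.mem_univ x₁)
    simpa [Real.norm_eq_abs] using this
  -- conclusion
  intro x₁ x₂
  have hfinal : |F (l x₁) - F (l x₂)| ≤ M_c / C_l * |l x₁ - l x₂| := by
    rcases le_total (l x₁) (l x₂) with h | h
    · rw [abs_sub_comm (F (l x₁)), abs_sub_comm (l x₁),
        abs_of_nonneg (by linarith : (0:ℝ) ≤ l x₂ - l x₁)]
      exact hkey _ _ h
    · rw [abs_of_nonneg (by linarith : (0:ℝ) ≤ l x₁ - l x₂)]
      exact hkey _ _ h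
  rw [hcF x₁, hcF x₂]
  calc |F (l x₁) - F (l x₂)| ≤ M_c / C_l * |l x₁ - l x₂| := hfinal
    _ ≤ M_c / C_l * (C_l * ‖x₁ - x₂‖) :=
        mul_le_mul_of_nonneg_left (hl_lip x₁ x₂) (by positivity)
    _ = M_c * ‖x₁ - x₂‖ := by field_simp
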